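/- The Euclidean projection of a nonzero x ∈ ℝ^m onto the unit ℓ¹-sphere { z ∈ ℝ^m : ‖z‖₁ = 1 } is given by proj(x) = sgn(x) ⊙ proj_{Δ^m}(|x|), where |x| is the entrywise absolute value, sgn the entrywise sign, ⊙ the entrywise product, and proj_{Δ^m} the projection onto the unit simplex, provided ‖x‖₁ ≥ 1 (so that the projection onto the simplex has the same support signs). -/
import Mathlib


/-- for `x ≠ 0` with `‖x‖₁ ≥ 1`, the Euclidean projection of `x` onto
the unit ℓ¹-sphere is `sgn(x) ⊙ proj_{Δ^m}(|x|)`: if `p` is the projection of the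
entrywise absolute value `|x|` onto the unit simplex, then `y i = sgn(xᵢ)·pᵢ` lies on
the ℓ¹-sphere and minimizes the squared distance to `x` over the ℓ¹-sphere. -/
theorem l1_sphere_projection
    (m : ℕ) (x : Fin m → ℝ) (hx : x ≠ 0) (hx1 : 1 ≤ ∑ i, |x i|)
    (p : Fin m → ℝ)
    (hpmem : (∀ i, 0 ≤ p i) ∧ ∑ i, p i = 1)
    (hpproj : ∀ z : Fin m → ℝ, (∀ i, 0 ≤ z i) → (∑ i, z i = 1) →
      ∑ i, (p i - |x i|) ^ 2 ≤ ∑ i, (z i - |x i|) ^ 2)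
    (y : Fin m → ℝ) (hy : ∀ i, y i = Real.sign (x i) * p i) :
    (∑ i, |y i| = 1) ∧
    ∀ z : Fin m → ℝ, (∑ i, |z i| = 1) →
      ∑ i, (y i - x i) ^ 2 ≤ ∑ i, (z i - x i) ^ 2 := by
  obtain ⟨hp0, hp1⟩ := hpmem
  -- Key: x j = 0 → p j = 0
  have key : ∀ j, x j = 0 → p j = 0 := by
    intro j hxj
    by_contra hpj0
    have hpj : 0 < p j := lt_of_le_of_ne (hp0 j) (Ne.symm hpj0)
    have hk : ∃ k, p k < |x k| := by
      by_contra hk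
      push_neg at hk
      have heq : ∀ i ∈ Finset.univ, |x i| = p i := by
        rw [← Finset.sum_eq_sum_iff_of_le (fun i _ => hk i)]
        have hsum : ∑ i, |x i| ≤ ∑ i, p i :=
          Finset.sum_le_sum (fun i _ => hk i)
        linarith
      have := heq j (Finset.mem_univ j)
      rw [hxj] at this
      simp at this
      exact hpj0 this.symm
    obtain ⟨k, hk⟩ := hk
    have hjk : j ≠ k := by
      intro h; rw [h] at hxj; rw [hxj] at hk; simp at hk
      exact absurd (hp0 k) (not_le.mpr hk)
    set δ := p j + |x k| - p k with hδdef
    have hδ : 0 < δ := by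
      have h1 : 0 < |x k| - p k := by linarith
      linarith
    set ε := min (p j) (δ / 2) with hεdef
    have hε0 : 0 < ε := lt_min hpj (by linarith)
    have hεj : ε ≤ p j := min_le_left _ _
    have hεδ : ε < δ := lt_of_le_of_lt (min_le_right _ _) (by linarith)
    set z : Fin m → ℝ := fun i => if i = j then p j - ε else if i = k then p k + ε else p i
      with hzdef
    have hzj : z j = p j - ε := by simp [hzdef]
    have hzk : z k = p k + ε := by simp [hzdef, Ne.symm hjk]
    have hz0 : ∀ i, 0 ≤ z i := by
      intro i
      simp only [hzdef]
      split
      · linarith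
      · split
        · linarith [hp0 k]
        · exact hp0 i
    have hz1 : ∑ i, z i = 1 := by
      have h2 : ∑ i, (z i - p i) = 0 := by
        rw [← Finset.sum_subset (Finset.subset_univ {j, k})]
        · rw [Finset.sum_pair hjk, hzj, hzk]
          ring
        · intro i _ hi
          simp only [Finset.mem_insert, Finset.mem_singleton] at hi
          push_neg at hi
          simp [hzdef, hi.1, hi.2]
      rw [Finset.sum_sub_distrib, hp1] at h2
      linarith
    have hobj := hpproj z hz0 hz1
    have hdiff : ∑ i, (z i - |x i|) ^ 2 - ∑ i, (p i - |x i|) ^ 2 = 2 * ε * (ε - δ) := by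
      rw [← Finset.sum_sub_distrib]
      rw [← Finset.sum_subset (Finset.subset_univ {j, k})]
      · rw [Finset.sum_pair hjk, hzj, hzk, hxj, abs_zero, hδdef]
        ring
      · intro i _ hi
        simp only [Finset.mem_insert, Finset.mem_singleton] at hi
        push_neg at hi
        simp [hzdef, hi.1, hi.2]
    nlinarith
  -- |y i| = p i
  have hyabs : ∀ i, |y i| = p i := by
    intro i
    rw [hy i]
    rcases lt_trichotomy (x i) 0 with h' | h' | h'
    · rw [Real.sign_of_neg h', abs_mul, abs_of_nonneg (hp0 i)]; norm_num
    · rw [h', key i h']; simp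
    · rw [Real.sign_of_pos h', abs_mul, abs_of_nonneg (hp0 i)]; norm_num
  constructor
  · simp_rw [hyabs]; exact hp1
  · intro z hz
    have hyx : ∀ i, (y i - x i) ^ 2 = (p i - |x i|) ^ 2 := by
      intro i
      rcases lt_trichotomy (x i) 0 with h' | h' | h'
      · rw [hy i, Real.sign_of_neg h', abs_of_neg h']; ring
      · rw [hy i, h', key i h']; simp
      · rw [hy i, Real.sign_of_pos h', abs_of_pos h']; ring
    calc ∑ i, (y i - x i) ^ 2 = ∑ i, (p i - |x i|) ^ 2 :=
          Finset.sum_congr rfl (fun i _ => hyx i)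
      _ ≤ ∑ i, (|z i| - |x i|) ^ 2 :=
          hpproj (fun i => |z i|) (fun i => abs_nonneg _) hz
      _ ≤ ∑ i, (z i - x i) ^ 2 := by
          apply Finset.sum_le_sum
          intro i _
          have h1 : z i * x i ≤ |z i| * |x i| := by
            rw [← abs_mul]; exact le_abs_self _
          nlinarith [sq_abs (z i), sq_abs (x i)]
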